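/- Let γ > 0 and d, m ∈ ℕ. Let α₁, α₂ ∈ ℝ^d, let σ₁, σ₂ be real m×d matrices, let Π₁, Π₂ ⊆ ℝ^m with Π₂ nonempty, and let K₁, K₂ ≥ 0 and z₁, z₂ ∈ ℝ^d with ‖z₁‖ ≤ K₁ and ‖z₂‖ ≤ K₂. Assume: (i) there exists π̂ ∈ Π₁ with σ₁ᵀπ̂ = α₁/γ; (ii) the risk-premium monotonicity condition ‖α₁‖²/(2γ) ≥ ‖α₂‖²/(2γ) + γK₁²/2 + ‖α₁ − α₂‖·K₁ + (K₁ + K₂)‖α₂‖. Then inf_{π ∈ Π₁} [ (γ/2)‖σ₁ᵀπ − (z₁ + α₁/γ)‖² − α₁·z₁ − ‖α₁‖²/(2γ) ] ≤ inf_{π ∈ Π₂} [ (γ/2)‖σ₂ᵀπ − (z₂ + α₂/γ)‖² − α₂·z₂ − ‖α₂‖²/(2γ) ]. -/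
import Mathlib


local notation "⟪" x ", " y "⟫" => @inner ℝ _ _ x y

/-- **Comparison of minimized quadratic drivers across consecutive default intervals**:
under the Merton-strategy condition `σ₁ᵀπh = α₁/γ` for some `πh ∈ Π₁` and the
risk-premium monotonicity condition
`‖α₁‖²/(2γ) ≥ ‖α₂‖²/(2γ) + γK₁²/2 + ‖α₁ − α₂‖K₁ + (K₁ + K₂)‖α₂‖`,
one has
`inf_{π∈Π₁} [(γ/2)‖σ₁ᵀπ − (z₁ + α₁/γ)‖² − α₁·z₁ − ‖α₁‖²/(2γ)]
  ≤ inf_{π∈Π₂} [(γ/2)‖σ₂ᵀπ − (z₂ + α₂/γ)‖² − α₂·z₂ − ‖α₂‖²/(2γ)]`. -/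
theorem minimized_driver_comparison (γ : ℝ) (hγ : 0 < γ) (d m : ℕ)
    (α₁ α₂ : EuclideanSpace ℝ (Fin d))
    (σ₁ σ₂ : Matrix (Fin m) (Fin d) ℝ)
    (P₁ P₂ : Set (EuclideanSpace ℝ (Fin m))) (hP₂ : P₂.Nonempty)
    (K₁ K₂ : ℝ) (hK₁ : 0 ≤ K₁) (hK₂ : 0 ≤ K₂)
    (z₁ z₂ : EuclideanSpace ℝ (Fin d)) (hz₁ : ‖z₁‖ ≤ K₁) (hz₂ : ‖z₂‖ ≤ K₂)
    (hmerton : ∃ π ∈ P₁, Matrix.toEuclideanLin σ₁.transpose π = γ⁻¹ • α₁)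
    (hmono : ‖α₂‖ ^ 2 / (2 * γ) + γ * K₁ ^ 2 / 2 + ‖α₁ - α₂‖ * K₁ + (K₁ + K₂) * ‖α₂‖ ≤
      ‖α₁‖ ^ 2 / (2 * γ)) :
    sInf ((fun π => γ / 2 * ‖Matrix.toEuclideanLin σ₁.transpose π - (z₁ + γ⁻¹ • α₁)‖ ^ 2
        - ⟪α₁, z₁⟫ - ‖α₁‖ ^ 2 / (2 * γ)) '' P₁) ≤
      sInf ((fun π => γ / 2 * ‖Matrix.toEuclideanLin σ₂.transpose π - (z₂ + γ⁻¹ • α₂)‖ ^ 2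
        - ⟪α₂, z₂⟫ - ‖α₂‖ ^ 2 / (2 * γ)) '' P₂) := by

  obtain ⟨πh, hπh, hσ⟩ := hmerton
  set c₁ : ℝ := γ / 2 * ‖z₁‖ ^ 2 - ⟪α₁, z₁⟫ - ‖α₁‖ ^ 2 / (2 * γ) with hc₁
  -- key: c₁ ≤ -⟪α₂, z₂⟫ - ‖α₂‖ ^ 2 / (2 * γ)
  have hz1sq : ‖z₁‖ ^ 2 ≤ K₁ ^ 2 := pow_le_pow_left₀ (norm_nonneg _) hz₁ 2
  have h1 : ⟪α₂, z₂⟫ ≤ ‖α₂‖ * K₂ := by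
    have := abs_real_inner_le_norm α₂ z₂
    have h2 : ‖α₂‖ * ‖z₂‖ ≤ ‖α₂‖ * K₂ := by
      exact mul_le_mul_of_nonneg_left hz₂ (norm_nonneg _)
    have := abs_le.mp this
    linarith
  have h2 : ⟪α₂ - α₁, z₁⟫ = ⟪α₂, z₁⟫ - ⟪α₁, z₁⟫ := inner_sub_left _ _ _
  have h3 : ⟪α₂ - α₁, z₁⟫ ≤ ‖α₁ - α₂‖ * K₁ := by
    have ha := abs_le.mp (abs_real_inner_le_norm (α₂ - α₁) z₁)
    have : ‖α₂ - α₁‖ * ‖z₁‖ ≤ ‖α₁ - α₂‖ * K₁ := by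
      rw [norm_sub_rev]
      exact mul_le_mul_of_nonneg_left hz₁ (norm_nonneg _) |>.trans
        (mul_le_mul_of_nonneg_right le_rfl hK₁) |>.trans le_rfl
    linarith [ha.2]
  have h4 : ⟪α₂, z₁⟫ ≥ -(‖α₂‖ * K₁) := by
    have ha := abs_le.mp (abs_real_inner_le_norm α₂ z₁)
    have : ‖α₂‖ * ‖z₁‖ ≤ ‖α₂‖ * K₁ := mul_le_mul_of_nonneg_left hz₁ (norm_nonneg _)
    linarith
  have hkey : c₁ ≤ -⟪α₂, z₂⟫ - ‖α₂‖ ^ 2 / (2 * γ) := by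
    have hg : γ / 2 * ‖z₁‖ ^ 2 ≤ γ * K₁ ^ 2 / 2 := by nlinarith
    have h5 : -⟪α₁, z₁⟫ ≤ ‖α₁ - α₂‖ * K₁ + ‖α₂‖ * K₁ := by linarith
    rw [hc₁]; linarith [hg, h5, h1, hmono]
  -- left inf ≤ c₁
  have hb : BddBelow ((fun π => γ / 2 * ‖Matrix.toEuclideanLin σ₁.transpose π - (z₁ + γ⁻¹ • α₁)‖ ^ 2
      - ⟪α₁, z₁⟫ - ‖α₁‖ ^ 2 / (2 * γ)) '' P₁) := by
    refine ⟨-⟪α₁, z₁⟫ - ‖α₁‖ ^ 2 / (2 * γ), ?_⟩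
    rintro x ⟨π, hπ, rfl⟩
    have : (0:ℝ) ≤ γ / 2 * ‖Matrix.toEuclideanLin σ₁.transpose π - (z₁ + γ⁻¹ • α₁)‖ ^ 2 := by
      positivity
    simp only
    linarith
  have hmem : c₁ ∈ ((fun π => γ / 2 * ‖Matrix.toEuclideanLin σ₁.transpose π - (z₁ + γ⁻¹ • α₁)‖ ^ 2
      - ⟪α₁, z₁⟫ - ‖α₁‖ ^ 2 / (2 * γ)) '' P₁) := by
    refine ⟨πh, hπh, ?_⟩
    have he : Matrix.toEuclideanLin σ₁.transpose πh - (z₁ + γ⁻¹ • α₁) = -z₁ := by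
      rw [hσ]; abel
    simp only [he, norm_neg, hc₁]
  have hleft := csInf_le hb hmem
  -- c₁ ≤ right inf
  have hright : c₁ ≤ sInf ((fun π => γ / 2 * ‖Matrix.toEuclideanLin σ₂.transpose π - (z₂ + γ⁻¹ • α₂)‖ ^ 2
      - ⟪α₂, z₂⟫ - ‖α₂‖ ^ 2 / (2 * γ)) '' P₂) := by
    refine le_csInf (hP₂.image _) ?_
    rintro x ⟨π, hπ, rfl⟩
    have : (0:ℝ) ≤ γ / 2 * ‖Matrix.toEuclideanLin σ₂.transpose π - (z₂ + γ⁻¹ • α₂)‖ ^ 2 := by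
      positivity
    simp only
    linarith
  linarith
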